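/- As formal power series, (−q;q)_∞ · Σ_{m≥0} q^{m(m+1)/2} = (−q;q)_∞^3 · (q;q)_∞, i.e., Σ_{m≥0} q^{m(m+1)/2} = (q^2;q^2)_∞ / (q;q^2)_∞. -/

import Mathlib

noncomputable instance : TopologicalSpace (PowerSeries ℤ) :=
  inferInstanceAs (TopologicalSpace ((Unit →₀ ℕ) → ℤ))
noncomputable instance : TopologicalSpace (PowerSeries ℚ) :=
  inferInstanceAs (TopologicalSpace ((Unit →₀ ℕ) → ℚ))

noncomputable instance : T2Space (PowerSeries ℤ) :=
  inferInstanceAs (T2Space ((Unit →₀ ℕ) → ℤ))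
noncomputable instance : T2Space (PowerSeries ℚ) :=
  inferInstanceAs (T2Space ((Unit →₀ ℕ) → ℚ))

open PowerSeries Finset Filter

section Cong
variable {R : Type*} [CommRing R]

/-- congruence mod X^(M+1) -/
def Cong (M : ℕ) (f g : PowerSeries R) : Prop := ∀ i ≤ M, coeff i f = coeff i g

lemma Cong.refl {M : ℕ} (f : PowerSeries R) : Cong M f f := fun _ _ => rfl

lemma Cong.symm {M : ℕ} {f g : PowerSeries R} (h : Cong M f g) : Cong M g f :=
  fun i hi => (h i hi).symm

lemma Cong.trans {M : ℕ} {f g h : PowerSeries R} (h1 : Cong M f g) (h2 : Cong M g h) :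
    Cong M f h := fun i hi => (h1 i hi).trans (h2 i hi)

lemma Cong.mul {M : ℕ} {f f' g g' : PowerSeries R} (hf : Cong M f f') (hg : Cong M g g') :
    Cong M (f * g) (f' * g') := by
  intro i hi
  rw [coeff_mul, coeff_mul]
  refine Finset.sum_congr rfl fun p hp => ?_
  rw [Finset.HasAntidiagonal.mem_antidiagonal] at hp
  rw [hf p.1 (le_trans (by omega) hi), hg p.2 (le_trans (by omega) hi)]

lemma Cong.prod {M : ℕ} {ι : Type*} (s : Finset ι) (f g : ι → PowerSeries R)
    (h : ∀ i ∈ s, Cong M (f i) (g i)) :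
    Cong M (∏ i ∈ s, f i) (∏ i ∈ s, g i) := by
  classical
  induction s using Finset.induction_on with
  | empty => exact Cong.refl _
  | insert _ _ hx ih =>
    rename_i a s
    rw [Finset.prod_insert hx, Finset.prod_insert hx]
    exact Cong.mul (h a (mem_insert_self a s)) (ih fun i hi => h i (mem_insert_of_mem hi))

/-- a product of factors each ≡ 1 is ≡ 1 -/
lemma Cong.prod_one {M : ℕ} {ι : Type*} (s : Finset ι) (f : ι → PowerSeries R)
    (h : ∀ i ∈ s, Cong M (f i) 1) : Cong M (∏ i ∈ s, f i) 1 := by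
  have := Cong.prod s f (fun _ => 1) h
  simpa using this

lemma cong_one_add {M e : ℕ} (he : M < e) : Cong M (1 + (X : PowerSeries R) ^ e) 1 := by
  intro i hi
  rw [map_add, coeff_X_pow, if_neg (by omega), add_zero]

lemma cong_one_sub {M e : ℕ} (he : M < e) : Cong M (1 - (X : PowerSeries R) ^ e) 1 := by
  intro i hi
  rw [map_sub, coeff_X_pow, if_neg (by omega), sub_zero]

lemma cong_zero_pow {M e : ℕ} (he : M < e) : Cong M ((X : PowerSeries R) ^ e) 0 := by
  intro i hi
  rw [coeff_X_pow, if_neg (by omega), map_zero]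

/-- extending a product by high-order factors doesn't change low coefficients -/
lemma Cong.prod_superset {M : ℕ} {s t : Finset ℕ} (hst : s ⊆ t) (f : ℕ → PowerSeries R)
    (h : ∀ i ∈ t, i ∉ s → Cong M (f i) 1) :
    Cong M (∏ i ∈ t, f i) (∏ i ∈ s, f i) := by
  classical
  rw [← Finset.prod_sdiff hst]
  have h1 : Cong M (∏ i ∈ t \ s, f i) 1 :=
    Cong.prod_one _ _ fun i hi => h i (Finset.mem_sdiff.1 hi).1 (Finset.mem_sdiff.1 hi).2
  simpa using Cong.mul h1 (Cong.refl (∏ i ∈ s, f i))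

lemma Cong.sum_superset {M : ℕ} {s t : Finset ℕ} (hst : s ⊆ t) (f : ℕ → PowerSeries R)
    (h : ∀ i ∈ t, i ∉ s → Cong M (f i) 0) :
    Cong M (∑ i ∈ t, f i) (∑ i ∈ s, f i) := by
  classical
  intro i hi
  rw [← Finset.sum_sdiff hst, map_add, map_sum]
  have : ∑ j ∈ t \ s, coeff i (f j) = 0 := by
    refine Finset.sum_eq_zero fun j hj => ?_
    rw [h j (Finset.mem_sdiff.1 hj).1 (Finset.mem_sdiff.1 hj).2 i hi, map_zero]
  rw [map_sum, this, zero_add]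

end Cong
section Stab
variable {R : Type*} [CommRing R] [TopologicalSpace R] [T2Space R]

local instance : TopologicalSpace (PowerSeries R) :=
  inferInstanceAs (TopologicalSpace ((Unit →₀ ℕ) → R))

omit [TopologicalSpace R] [T2Space R] in
lemma coeff_of_apply (x : Unit →₀ ℕ) (h : PowerSeries R) : h x = coeff (x ()) h := by
  conv_lhs => rw [Finsupp.unique_single x]
  rfl

lemma hasProd_of_coeff_stab (f : ℕ → PowerSeries R) (g : PowerSeries R)
    (h : ∀ d : ℕ, ∀ s : Finset ℕ, Finset.range (d + 1) ⊆ s →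
      coeff d (∏ i ∈ s, f i) = coeff d g) : HasProd f g := by
  rw [HasProd]
  refine tendsto_pi_nhds.mpr fun x => ?_
  refine Filter.Tendsto.congr' ?_ (tendsto_const_nhds : Filter.Tendsto (fun _ : Finset ℕ => g x) Filter.atTop (nhds (g x)))
  filter_upwards [Filter.eventually_ge_atTop (Finset.range (x () + 1))] with s hs
  rw [coeff_of_apply x g, coeff_of_apply x (∏ b ∈ s, f b)]
  exact (h (x ()) s hs).symm

lemma hasSum_of_coeff_stab (f : ℕ → PowerSeries R) (g : PowerSeries R)
    (h : ∀ d : ℕ, ∀ s : Finset ℕ, Finset.range (d + 1) ⊆ s →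
      coeff d (∑ i ∈ s, f i) = coeff d g) : HasSum f g := by
  rw [HasSum]
  refine tendsto_pi_nhds.mpr fun x => ?_
  refine Filter.Tendsto.congr' ?_ (tendsto_const_nhds : Filter.Tendsto (fun _ : Finset ℕ => g x) Filter.atTop (nhds (g x)))
  filter_upwards [Filter.eventually_ge_atTop (Finset.range (x () + 1))] with s hs
  rw [coeff_of_apply x g, coeff_of_apply x (∑ b ∈ s, f b)]
  exact (h (x ()) s hs).symm

end Stab
section Lim
variable {R : Type*} [CommRing R] [TopologicalSpace R] [T2Space R]

local instance : TopologicalSpace (PowerSeries R) :=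
  inferInstanceAs (TopologicalSpace ((Unit →₀ ℕ) → R))

/-- the limit of the partial products, defined coefficientwise -/
noncomputable def limProd (f : ℕ → PowerSeries R) : PowerSeries R :=
  PowerSeries.mk fun d => coeff d (∏ i ∈ Finset.range (d + 1), f i)

noncomputable def limSum (f : ℕ → PowerSeries R) : PowerSeries R :=
  PowerSeries.mk fun d => coeff d (∑ i ∈ Finset.range (d + 1), f i)

omit [TopologicalSpace R] [T2Space R] in
lemma limProd_cong (f : ℕ → PowerSeries R) (H : ∀ n M, M < n → Cong M (f n) 1) (M : ℕ) :
    Cong M (limProd f) (∏ i ∈ Finset.range (M + 1), f i) := by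
  intro i hi
  rw [limProd, coeff_mk]
  have h1 : Cong i (∏ j ∈ Finset.range (M + 1), f j) (∏ j ∈ Finset.range (i + 1), f j) :=
    Cong.prod_superset (Finset.range_subset_range.2 (by omega)) f
      (fun n _ hn2 => H n i (by simp only [Finset.mem_range, not_lt] at hn2; omega))
  exact (h1 i le_rfl).symm

omit [TopologicalSpace R] [T2Space R] in
lemma limSum_cong (f : ℕ → PowerSeries R) (H : ∀ n M, M < n → Cong M (f n) 0) (M : ℕ) :
    Cong M (limSum f) (∑ i ∈ Finset.range (M + 1), f i) := by
  intro i hi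
  rw [limSum, coeff_mk]
  have h1 : Cong i (∑ j ∈ Finset.range (M + 1), f j) (∑ j ∈ Finset.range (i + 1), f j) :=
    Cong.sum_superset (Finset.range_subset_range.2 (by omega)) f
      (fun n _ hn2 => H n i (by simp only [Finset.mem_range, not_lt] at hn2; omega))
  exact (h1 i le_rfl).symm

lemma hasProd_limProd (f : ℕ → PowerSeries R) (H : ∀ n M, M < n → Cong M (f n) 1) :
    HasProd f (limProd f) := by
  refine hasProd_of_coeff_stab f _ fun d s hs => ?_
  have h1 : Cong d (∏ i ∈ s, f i) (∏ i ∈ Finset.range (d + 1), f i) :=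
    Cong.prod_superset hs f
      (fun n _ hn2 => H n d (by simp only [Finset.mem_range, not_lt] at hn2; omega))
  rw [h1 d le_rfl, limProd, coeff_mk]

lemma hasSum_limSum (f : ℕ → PowerSeries R) (H : ∀ n M, M < n → Cong M (f n) 0) :
    HasSum f (limSum f) := by
  refine hasSum_of_coeff_stab f _ fun d s hs => ?_
  have h1 : Cong d (∑ i ∈ s, f i) (∑ i ∈ Finset.range (d + 1), f i) :=
    Cong.sum_superset hs f
      (fun n _ hn2 => H n d (by simp only [Finset.mem_range, not_lt] at hn2; omega))
  rw [h1 d le_rfl, limSum, coeff_mk]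

end Lim
section GaussCore

abbrev Zq := PowerSeries ℤ

def tri : ℕ → ℕ
  | 0 => 0
  | m + 1 => tri m + m + 1

lemma two_tri (m : ℕ) : 2 * tri m = m * (m + 1) := by
  induction m with
  | zero => rfl
  | succ n ih =>
    have h : (n + 1) * (n + 2) = n * (n + 1) + 2 * (n + 1) := by ring
    rw [h, ← ih]
    simp only [tri]
    omega

lemma tri_eq (m : ℕ) : tri m = m * (m + 1) / 2 := by
  have h := two_tri m
  obtain ⟨K, hK⟩ : ∃ K, m * (m + 1) = K := ⟨_, rfl⟩
  rw [hK] at h ⊢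
  omega

lemma tri_ge (m : ℕ) : m ≤ tri m := by
  induction m with
  | zero => exact Nat.le_refl 0
  | succ n ih => simp only [tri]; omega

/-- finite products (1 - X^a)(1 - X^{a+1})⋯(1 - X^{b-1}) -/
noncomputable def W (a b : ℕ) : Zq := ∏ i ∈ Finset.Ico a b, (1 - (PowerSeries.X : Zq) ^ i)

/-- Gaussian binomial coefficients as power series over ℤ -/
noncomputable def gb : ℕ → ℕ → Zq
  | 0, 0 => 1
  | 0, _ + 1 => 0
  | _ + 1, 0 => 1
  | n + 1, k + 1 => PowerSeries.X ^ (k + 1) * gb n (k + 1) + gb n k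

open PowerSeries Finset

lemma gb_zero_right (n : ℕ) : gb n 0 = 1 := by cases n <;> rfl

lemma gb_pascal1 (n k : ℕ) : gb (n + 1) (k + 1) = X ^ (k + 1) * gb n (k + 1) + gb n k := rfl

lemma gb_eq_zero : ∀ {n k : ℕ}, n < k → gb n k = 0 := by
  intro n
  induction n with
  | zero => intro k hk; match k, hk with | k + 1, _ => rfl
  | succ n ih =>
    intro k hk
    match k, hk with
    | k + 1, hk =>
      rw [gb_pascal1, ih (by omega), ih (by omega), mul_zero, add_zero]

lemma gb_diag (n : ℕ) : gb n n = 1 := by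
  induction n with
  | zero => rfl
  | succ n ih => rw [gb_pascal1, gb_eq_zero (by omega), mul_zero, zero_add, ih]

lemma gb_one (n : ℕ) : gb n 1 = ∑ i ∈ range n, (X : Zq) ^ i := by
  induction n with
  | zero => rfl
  | succ n ih =>
    rw [gb_pascal1, ih, gb_zero_right, Finset.sum_range_succ' (fun i => (X : Zq) ^ i)]
    rw [Finset.mul_sum]
    simp [pow_succ, mul_comm, add_comm]

lemma gb_pascal2 : ∀ n k, k ≤ n → gb (n + 1) (k + 1) = gb n (k + 1) + X ^ (n - k) * gb n k := by
  intro n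
  induction n with
  | zero =>
    intro k hk
    interval_cases k
    rw [gb_pascal1, gb_eq_zero (by omega : (0:ℕ) < 1), gb_zero_right]
    simp
  | succ n ih =>
    intro k hk
    match k, hk with
    | 0, _ =>
      rw [gb_pascal1, gb_one, gb_zero_right]
      have h1 : (X : Zq) ^ (0 + 1) * ∑ i ∈ range (n + 1), (X : Zq) ^ i
          = ∑ i ∈ range (n + 1), (X : Zq) ^ (i + 1) := by
        rw [Finset.mul_sum]
        exact Finset.sum_congr rfl fun i _ => by ring
      rw [h1, Nat.sub_zero, mul_one]
      have h3 := Finset.sum_range_succ' (fun i => (X : Zq) ^ i) (n + 1)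
      rw [Finset.sum_range_succ (fun i => (X : Zq) ^ i) (n + 1)] at h3
      rw [h3, pow_zero]
    | k' + 1, hk =>
      rcases Nat.lt_or_ge k' n with h | h
      · have hO := gb_pascal1 (n + 1) (k' + 1)
        have hG1 := gb_pascal1 n (k' + 1)
        have hG2 : gb (n + 1) (k' + 1 + 1) = gb n (k' + 1 + 1) + X ^ (n - (k' + 1)) * gb n (k' + 1) :=
          ih (k' + 1) (by omega)
        have hg1 := gb_pascal1 n k'
        have hg2 : gb (n + 1) (k' + 1) = gb n (k' + 1) + X ^ (n - k') * gb n k' := ih k' (by omega)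
        have hx : (X : Zq) ^ (n - k') = X * X ^ (n - (k' + 1)) := by
          rw [show n - k' = (n - (k' + 1)) + 1 from by omega, pow_succ]
          ring
        rw [show n + 1 - (k' + 1) = n - k' from by omega]
        linear_combination hO + (-1 : Zq) * hG1 + ((X : Zq) ^ (k' + 1 + 1)) * hG2
          + (-(X : Zq) ^ (n - k')) * hg1 + hg2 + (-(X : Zq) ^ (k' + 1) * gb n (k' + 1)) * hx
      · rw [gb_pascal1]
        have hk'n : k' = n := by omega
        subst hk'n
        rw [gb_eq_zero (show k' + 1 < k' + 1 + 1 from by omega), gb_diag]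
        simp

lemma W_one (a : ℕ) : W a a = 1 := by simp [W]

lemma gb_mul_W : ∀ n k, k ≤ n → gb n k * W 1 (k + 1) = W (n - k + 1) (n + 1) := by
  intro n
  induction n with
  | zero =>
    intro k hk
    interval_cases k
    simp [gb, W]
  | succ n ih =>
    intro k hk
    match k, hk with
    | 0, _ =>
      have h1 : W 1 (0 + 1) = 1 := by simp [W]
      have h2 : W (n + 1 - 0 + 1) (n + 1 + 1) = 1 := by rw [Nat.sub_zero]; exact W_one _
      rw [gb_zero_right, one_mul, h1, h2]
    | k' + 1, hk =>
      rcases Nat.lt_or_ge k' n with h | h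
      · have hW2 : W 1 (k' + 1 + 1) = W 1 (k' + 1) * (1 - (X : Zq) ^ (k' + 1)) := by
          rw [W, W, Finset.prod_Ico_succ_top (show 1 ≤ k' + 1 from by omega)]
        have hIH1 : gb n (k' + 1) * W 1 (k' + 1 + 1) = W (n - (k' + 1) + 1) (n + 1) :=
          ih (k' + 1) (by omega)
        rw [show n - (k' + 1) + 1 = n - k' from by omega] at hIH1
        have hsplit : W (n - k') (n + 1)
            = (1 - (X : Zq) ^ (n - k')) * W (n - k' + 1) (n + 1) := by
          rw [W, W, Finset.prod_eq_prod_Ico_succ_bot (show n - k' < n + 1 from by omega)]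
        have hIH0 : gb n k' * W 1 (k' + 1) = W (n - k' + 1) (n + 1) := ih k' (by omega)
        have htop : W (n + 1 - (k' + 1) + 1) (n + 1 + 1)
            = W (n - k' + 1) (n + 1) * (1 - (X : Zq) ^ (n + 1)) := by
          rw [show n + 1 - (k' + 1) + 1 = n - k' + 1 from by omega, W, W,
            Finset.prod_Ico_succ_top (show n - k' + 1 ≤ n + 1 from by omega)]
        have hpow : (X : Zq) ^ (n + 1) = X ^ (k' + 1) * X ^ (n - k') := by
          rw [← pow_add]
          congr 1
          omega
        rw [gb_pascal1, htop, hpow, hW2]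
        rw [hsplit, hW2] at hIH1
        linear_combination ((X : Zq) ^ (k' + 1)) * hIH1 + (1 - (X : Zq) ^ (k' + 1)) * hIH0
      · have hk'n : k' = n := by omega
        subst hk'n
        rw [gb_diag, one_mul, show k' + 1 - (k' + 1) + 1 = 1 from by omega]

lemma W_split (a b c : ℕ) (hab : a ≤ b) (hbc : b ≤ c) : W a c = W a b * W b c := by
  rw [W, W, W, Finset.prod_Ico_consecutive _ hab hbc]

lemma gb_mul_W_full (n k : ℕ) (hk : k ≤ n) :
    gb n k * W 1 (n + 1) = W (n - k + 1) (n + 1) * W (k + 1) (n + 1) := by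
  rw [W_split 1 (k + 1) (n + 1) (by omega) (by omega), ← mul_assoc, gb_mul_W n k hk]

end GaussCore
section ClaimSection
open PowerSeries Finset Polynomial

lemma tri_succ (u : ℕ) : tri (u + 1) = tri u + u + 1 := rfl

/-- the exponent (k-N)(k-N-1)/2 as a natural number -/
def dd (N k : ℕ) : ℕ := tri ((N - k) + (k - N - 1))

noncomputable def cc (N k : ℕ) : Zq := gb (2 * N) k * (PowerSeries.X : Zq) ^ (dd N k)

lemma geom_step (m : ℕ) :
    ∑ i ∈ range (m + 2), (PowerSeries.X : Zq) ^ i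
      = PowerSeries.X * (∑ i ∈ range m, (PowerSeries.X : Zq) ^ i) + 1 + PowerSeries.X ^ (m + 1) := by
  rw [Finset.sum_range_succ, Finset.sum_range_succ' (fun i => (PowerSeries.X : Zq) ^ i) m,
    Finset.mul_sum]
  simp only [pow_zero, pow_succ]
  rw [Finset.sum_congr rfl fun i _ => (mul_comm ((PowerSeries.X : Zq) ^ i) PowerSeries.X)]

lemma cc_zero (N : ℕ) : cc (N + 1) 0 = (PowerSeries.X : Zq) ^ (N + 1) * cc N 0 := by
  show gb (2 * (N + 1)) 0 * (PowerSeries.X : Zq) ^ (dd (N + 1) 0)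
    = PowerSeries.X ^ (N + 1) * (gb (2 * N) 0 * PowerSeries.X ^ (dd N 0))
  rw [gb_zero_right, gb_zero_right, one_mul, one_mul,
    show dd (N + 1) 0 = tri (N + 1) from by unfold dd; congr 1; omega,
    show dd N 0 = tri N from by unfold dd; congr 1; omega,
    ← pow_add]
  congr 1
  rw [tri_succ]
  omega

lemma cc_one (N : ℕ) : cc (N + 1) 1
    = (PowerSeries.X : Zq) ^ (N + 1) * cc N 1 + (1 + PowerSeries.X ^ (2 * N + 1)) * cc N 0 := by
  show gb (2 * (N + 1)) 1 * (PowerSeries.X : Zq) ^ (dd (N + 1) 1)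
    = PowerSeries.X ^ (N + 1) * (gb (2 * N) 1 * PowerSeries.X ^ (dd N 1))
      + (1 + PowerSeries.X ^ (2 * N + 1)) * (gb (2 * N) 0 * PowerSeries.X ^ (dd N 0))
  have hdd0 : dd N 0 = tri N := by unfold dd; congr 1; omega
  have hdd0' : dd (N + 1) 1 = tri N := by unfold dd; congr 1; omega
  have hdd1 : dd N 1 = tri (N - 1) := by unfold dd; congr 1; omega
  have hexp : N + 1 + tri (N - 1) = tri N + 1 := by
    rcases N with _ | M
    · rfl
    · rw [Nat.add_sub_cancel, tri_succ]
      omega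
  rw [gb_one, gb_one, gb_zero_right, hdd0, hdd0', hdd1, one_mul,
    show 2 * (N + 1) = 2 * N + 2 from by omega]
  have hgeom := geom_step (2 * N)
  have hp : (PowerSeries.X : Zq) ^ (N + 1) * PowerSeries.X ^ (tri (N - 1))
      = PowerSeries.X * PowerSeries.X ^ (tri N) := by
    rw [← pow_add, hexp, pow_succ]
    ring
  linear_combination ((PowerSeries.X : Zq) ^ (tri N)) * hgeom
    - (∑ i ∈ range (2 * N), (PowerSeries.X : Zq) ^ i) * hp

lemma gbsq (N k : ℕ) (h : k ≤ 2 * N) :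
    gb (2 * N + 2) (k + 2) = PowerSeries.X ^ (k + 2) * gb (2 * N) (k + 2)
      + (1 + PowerSeries.X ^ (2 * N + 1)) * gb (2 * N) (k + 1)
      + PowerSeries.X ^ (2 * N - k) * gb (2 * N) k := by
  rcases Nat.lt_or_ge k (2 * N) with hlt | hge
  · have h1 : gb (2 * N + 1 + 1) (k + 1 + 1)
        = PowerSeries.X ^ (k + 1 + 1) * gb (2 * N + 1) (k + 1 + 1) + gb (2 * N + 1) (k + 1) :=
      gb_pascal1 (2 * N + 1) (k + 1)
    have h2 : gb (2 * N + 1) (k + 1 + 1)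
        = gb (2 * N) (k + 1 + 1) + PowerSeries.X ^ (2 * N - (k + 1)) * gb (2 * N) (k + 1) :=
      gb_pascal2 (2 * N) (k + 1) (by omega)
    have h3 : gb (2 * N + 1) (k + 1)
        = gb (2 * N) (k + 1) + PowerSeries.X ^ (2 * N - k) * gb (2 * N) k :=
      gb_pascal2 (2 * N) k (by omega)
    have hy : (PowerSeries.X : Zq) ^ (2 * N + 1)
        = PowerSeries.X ^ (k + 2) * PowerSeries.X ^ (2 * N - (k + 1)) := by
      rw [← pow_add]
      congr 1
      omega
    rw [show 2 * N + 2 = 2 * N + 1 + 1 from by omega, show k + 2 = k + 1 + 1 from by omega]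
    linear_combination h1 + ((PowerSeries.X : Zq) ^ (k + 1 + 1)) * h2 + h3
      - gb (2 * N) (k + 1) * hy
  · have hk2N : k = 2 * N := by omega
    subst hk2N
    rw [gb_diag, gb_eq_zero (show 2 * N < 2 * N + 2 from by omega),
      gb_eq_zero (show 2 * N < 2 * N + 1 from by omega), gb_diag, Nat.sub_self]
    simp

lemma cc_step (N k : ℕ) : cc (N + 1) (k + 2)
    = (PowerSeries.X : Zq) ^ (N + 1) * cc N (k + 2)
      + (1 + PowerSeries.X ^ (2 * N + 1)) * cc N (k + 1) + PowerSeries.X ^ N * cc N k := by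
  show gb (2 * (N + 1)) (k + 2) * (PowerSeries.X : Zq) ^ (dd (N + 1) (k + 2))
    = PowerSeries.X ^ (N + 1) * (gb (2 * N) (k + 2) * PowerSeries.X ^ (dd N (k + 2)))
      + (1 + PowerSeries.X ^ (2 * N + 1)) * (gb (2 * N) (k + 1) * PowerSeries.X ^ (dd N (k + 1)))
      + PowerSeries.X ^ N * (gb (2 * N) k * PowerSeries.X ^ (dd N k))
  rcases le_or_gt k (2 * N) with h | h
  · have e1 : (k + 2) + dd (N + 1) (k + 2) = (N + 1) + dd N (k + 2) := by
      unfold dd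
      rcases Nat.lt_or_ge (k + 2) (N + 1) with h1 | h1
      · rw [show (N + 1 - (k + 2)) + ((k + 2) - (N + 1) - 1) = (N - k - 2) + 1 from by omega,
          show (N - (k + 2)) + ((k + 2) - N - 1) = N - k - 2 from by omega, tri_succ]
        omega
      · rcases Nat.eq_or_lt_of_le h1 with h2 | h2
        · rw [show (N + 1 - (k + 2)) + ((k + 2) - (N + 1) - 1) = 0 from by omega,
            show (N - (k + 2)) + ((k + 2) - N - 1) = 0 from by omega]
          omega
        · rcases Nat.eq_or_lt_of_le h2 with h3 | h3
          · rw [show (N + 1 - (k + 2)) + ((k + 2) - (N + 1) - 1) = 0 from by omega,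
              show (N - (k + 2)) + ((k + 2) - N - 1) = 1 from by omega,
              show (1 : ℕ) = 0 + 1 from rfl, tri_succ]
            omega
          · rw [show (N + 1 - (k + 2)) + ((k + 2) - (N + 1) - 1) = k - N from by omega,
              show (N - (k + 2)) + ((k + 2) - N - 1) = (k - N) + 1 from by omega, tri_succ]
            omega
    have e2 : dd (N + 1) (k + 2) = dd N (k + 1) := by
      unfold dd
      congr 1
      omega
    have e3 : (2 * N - k) + dd (N + 1) (k + 2) = N + dd N k := by
      unfold dd
      rcases Nat.lt_or_ge k N with h1 | h1
      · rw [show (N + 1 - (k + 2)) + ((k + 2) - (N + 1) - 1) = N - k - 1 from by omega,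
          show (N - k) + (k - N - 1) = (N - k - 1) + 1 from by omega, tri_succ]
        omega
      · rcases Nat.eq_or_lt_of_le h1 with h2 | h2
        · rw [show (N + 1 - (k + 2)) + ((k + 2) - (N + 1) - 1) = 0 from by omega,
            show (N - k) + (k - N - 1) = 0 from by omega]
          omega
        · rw [show (N + 1 - (k + 2)) + ((k + 2) - (N + 1) - 1) = (k - N - 1) + 1 from by omega,
            show (N - k) + (k - N - 1) = k - N - 1 from by omega, tri_succ]
          omega
    have hsq := gbsq N k h
    have hA : (PowerSeries.X : Zq) ^ (k + 2) * PowerSeries.X ^ (dd (N + 1) (k + 2))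
        = PowerSeries.X ^ (N + 1) * PowerSeries.X ^ (dd N (k + 2)) := by
      rw [← pow_add, ← pow_add, e1]
    have hB : (PowerSeries.X : Zq) ^ (dd (N + 1) (k + 2)) = PowerSeries.X ^ (dd N (k + 1)) := by
      rw [e2]
    have hC : (PowerSeries.X : Zq) ^ (2 * N - k) * PowerSeries.X ^ (dd (N + 1) (k + 2))
        = PowerSeries.X ^ N * PowerSeries.X ^ (dd N k) := by
      rw [← pow_add, ← pow_add, e3]
    rw [show 2 * (N + 1) = 2 * N + 2 from by omega]
    linear_combination ((PowerSeries.X : Zq) ^ (dd (N + 1) (k + 2))) * hsq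
      + gb (2 * N) (k + 2) * hA
      + ((1 + (PowerSeries.X : Zq) ^ (2 * N + 1)) * gb (2 * N) (k + 1)) * hB
      + gb (2 * N) k * hC
  · rw [gb_eq_zero (show 2 * (N + 1) < k + 2 from by omega),
      gb_eq_zero (show 2 * N < k + 2 from by omega),
      gb_eq_zero (show 2 * N < k + 1 from by omega),
      gb_eq_zero (show 2 * N < k from by omega)]
    simp

end ClaimSection
section PolyClaim
open PowerSeries Finset Polynomial

noncomputable def SP (N : ℕ) : Polynomial Zq :=
  ∑ k ∈ Finset.range (2 * N + 1), Polynomial.C (cc N k) * Polynomial.X ^ k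

lemma coeff_SP (N k : ℕ) : (SP N).coeff k = cc N k := by
  rw [SP, Polynomial.finset_sum_coeff]
  have h : ∀ i ∈ Finset.range (2 * N + 1),
      (Polynomial.C (cc N i) * Polynomial.X ^ i).coeff k = if i = k then cc N i else 0 := by
    intro i _
    rw [Polynomial.coeff_C_mul, Polynomial.coeff_X_pow]
    split_ifs with h1 h2 h2
    · rw [mul_one]
    · exact absurd h1.symm h2
    · exact absurd h2.symm h1
    · rw [mul_zero]
  rw [Finset.sum_congr rfl h, Finset.sum_ite_eq' (Finset.range (2 * N + 1)) k (cc N)]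
  split_ifs with h1
  · rfl
  · rw [Finset.mem_range, not_lt] at h1
    show (0 : Zq) = gb (2 * N) k * PowerSeries.X ^ (dd N k)
    rw [gb_eq_zero (show 2 * N < k from by omega), zero_mul]

lemma SP_succ (N : ℕ) :
    SP N * ((Polynomial.X + Polynomial.C ((PowerSeries.X : Zq) ^ (N + 1)))
      * (1 + Polynomial.X * Polynomial.C ((PowerSeries.X : Zq) ^ N))) = SP (N + 1) := by
  have h2 : (PowerSeries.X : Zq) ^ (2 * N + 1) = PowerSeries.X ^ (N + 1) * PowerSeries.X ^ N := by
    rw [← pow_add]; congr 1; omega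
  have hexp : (Polynomial.X + Polynomial.C ((PowerSeries.X : Zq) ^ (N + 1)))
      * (1 + Polynomial.X * Polynomial.C ((PowerSeries.X : Zq) ^ N))
      = Polynomial.C ((PowerSeries.X : Zq) ^ (N + 1))
        + Polynomial.C (1 + (PowerSeries.X : Zq) ^ (2 * N + 1)) * Polynomial.X
        + Polynomial.C ((PowerSeries.X : Zq) ^ N) * Polynomial.X ^ 2 := by
    rw [h2]
    simp only [map_add, map_mul, map_one]
    ring
  rw [hexp]
  have hre : SP N * (Polynomial.C ((PowerSeries.X : Zq) ^ (N + 1))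
        + Polynomial.C (1 + (PowerSeries.X : Zq) ^ (2 * N + 1)) * Polynomial.X
        + Polynomial.C ((PowerSeries.X : Zq) ^ N) * Polynomial.X ^ 2)
      = Polynomial.C ((PowerSeries.X : Zq) ^ (N + 1)) * SP N
        + Polynomial.C (1 + (PowerSeries.X : Zq) ^ (2 * N + 1)) * (Polynomial.X * SP N)
        + Polynomial.C ((PowerSeries.X : Zq) ^ N) * (Polynomial.X ^ 2 * SP N) := by
    ring
  rw [hre]
  refine Polynomial.ext fun k => ?_
  rw [Polynomial.coeff_add, Polynomial.coeff_add, Polynomial.coeff_C_mul, Polynomial.coeff_C_mul,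
    Polynomial.coeff_C_mul, coeff_SP, coeff_SP]
  match k with
  | 0 =>
    have hx0 : (Polynomial.X * SP N).coeff 0 = 0 := by
      rw [Polynomial.mul_coeff_zero, Polynomial.coeff_X_zero, zero_mul]
    have hx20 : (Polynomial.X ^ 2 * SP N).coeff 0 = 0 := by
      rw [Polynomial.mul_coeff_zero]
      simp
    rw [hx0, hx20, cc_zero]
    ring
  | 1 =>
    have hx1 : (Polynomial.X * SP N).coeff 1 = (SP N).coeff 0 := Polynomial.coeff_X_mul (SP N) 0
    have hx21 : (Polynomial.X ^ 2 * SP N).coeff 1 = 0 := by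
      have hh : (Polynomial.X ^ 2 : Polynomial Zq) * SP N
          = Polynomial.X * (Polynomial.X * SP N) := by ring
      rw [hh]
      have := Polynomial.coeff_X_mul (Polynomial.X * SP N) 0
      rw [this, Polynomial.mul_coeff_zero, Polynomial.coeff_X_zero, zero_mul]
    rw [hx1, hx21, cc_one]
    simp only [coeff_SP]
    ring
  | (k + 2) =>
    have hx1 : (Polynomial.X * SP N).coeff (k + 2) = (SP N).coeff (k + 1) :=
      Polynomial.coeff_X_mul (SP N) (k + 1)
    have hx2 : (Polynomial.X ^ 2 * SP N).coeff (k + 2) = (SP N).coeff k :=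
      Polynomial.coeff_X_pow_mul (SP N) 2 k
    rw [hx1, hx2, cc_step]
    simp only [coeff_SP]

lemma claimN (N : ℕ) :
    (∏ i ∈ Finset.range N, (Polynomial.X + Polynomial.C ((PowerSeries.X : Zq) ^ (i + 1)))) *
      (∏ i ∈ Finset.range N, (1 + Polynomial.X * Polynomial.C ((PowerSeries.X : Zq) ^ i)))
      = SP N := by
  induction N with
  | zero =>
    rw [SP]
    show (1 : Polynomial Zq) * 1 = ∑ k ∈ Finset.range 1, Polynomial.C (cc 0 k) * Polynomial.X ^ k
    rw [Finset.sum_range_one]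
    show (1 : Polynomial Zq) * 1 = Polynomial.C (gb 0 0 * PowerSeries.X ^ (dd 0 0)) * Polynomial.X ^ 0
    rw [show gb 0 0 = 1 from rfl, show dd 0 0 = 0 from rfl]
    simp
  | succ N ih =>
    rw [Finset.prod_range_succ, Finset.prod_range_succ, ← SP_succ N, ← ih]
    ring

end PolyClaim
section Counting
open PowerSeries Finset Polynomial

lemma dd_left (N k : ℕ) (h : k ≤ N) : dd N k = tri (N - k) := by
  unfold dd; congr 1; omega

lemma W_cong_one (M a b : ℕ) (h : M < a) : Cong M (W a b) 1 := by
  refine Cong.prod_one _ _ fun i hi => ?_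
  rw [Finset.mem_Ico] at hi
  exact cong_one_sub (by omega)

lemma evalId (N : ℕ) :
    (∏ i ∈ range N, (1 + (PowerSeries.X : Zq) ^ (i + 1)))
      * (∏ i ∈ range N, (1 + (PowerSeries.X : Zq) ^ i))
      = ∑ k ∈ range (2 * N + 1), cc N k := by
  have h := congrArg (Polynomial.eval (1 : Zq)) (claimN N)
  rw [Polynomial.eval_mul, Polynomial.eval_prod, Polynomial.eval_prod, SP,
    Polynomial.eval_finset_sum] at h
  simp only [Polynomial.eval_add, Polynomial.eval_mul, Polynomial.eval_X, Polynomial.eval_C,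
    Polynomial.eval_one, Polynomial.eval_pow, one_mul, one_pow, mul_one] at h
  convert h using 2

lemma coeff_term (M N k : ℕ) (hN : N = M + 1) (hk : k ≤ 2 * N) :
    PowerSeries.coeff M (cc N k * W 1 (2 * N + 1)) = if dd N k = M then 1 else 0 := by
  have hrw : cc N k * W 1 (2 * N + 1)
      = (W (2 * N - k + 1) (2 * N + 1) * W (k + 1) (2 * N + 1)) * PowerSeries.X ^ (dd N k) := by
    show gb (2 * N) k * PowerSeries.X ^ (dd N k) * W 1 (2 * N + 1) = _
    rw [mul_right_comm, gb_mul_W_full (2 * N) k hk]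
  rw [hrw, PowerSeries.coeff_mul_X_pow']
  have harg : (N - k) + (k - N - 1) ≤ dd N k := tri_ge _
  split_ifs with h1 h2 h2
  · rw [show M - dd N k = 0 from by omega]
    have hc : Cong 0 (W (2 * N - k + 1) (2 * N + 1) * W (k + 1) (2 * N + 1)) (1 * 1) :=
      Cong.mul (W_cong_one 0 _ _ (by omega)) (W_cong_one 0 _ _ (by omega))
    rw [hc 0 le_rfl]
    simp
  · have hc : Cong (M - dd N k)
        (W (2 * N - k + 1) (2 * N + 1) * W (k + 1) (2 * N + 1)) (1 * 1) :=
      Cong.mul (W_cong_one _ _ _ (by omega)) (W_cong_one _ _ _ (by omega))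
    rw [hc (M - dd N k) le_rfl, one_mul, PowerSeries.coeff_one, if_neg (by omega)]
  · exact absurd (h2 ▸ le_rfl) h1
  · rfl

lemma count (M N : ℕ) (hN : N = M + 1) :
    ∑ k ∈ range (2 * N + 1), (if dd N k = M then (1 : ℤ) else 0)
      = 2 * ∑ m ∈ range N, (if tri m = M then (1 : ℤ) else 0) := by
  rw [show 2 * N + 1 = N + (N + 1) from by omega, Finset.sum_range_add]
  have h1 : ∀ k ∈ range N, (if dd N k = M then (1 : ℤ) else 0)
      = (if tri (N - k) = M then (1 : ℤ) else 0) := by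
    intro k hk
    rw [Finset.mem_range] at hk
    rw [dd_left N k (by omega)]
  rw [Finset.sum_congr rfl h1]
  have h2 : ∑ k ∈ range N, (if tri (N - k) = M then (1 : ℤ) else 0)
      = ∑ k ∈ range N, (if tri (k + 1) = M then (1 : ℤ) else 0) := by
    rw [← Finset.sum_range_reflect]
    refine Finset.sum_congr rfl fun k hk => ?_
    rw [Finset.mem_range] at hk
    rw [show N - (N - 1 - k) = k + 1 from by omega]
  have h3 : ∑ k ∈ range (N + 1), (if dd N (N + k) = M then (1 : ℤ) else 0)
      = ∑ k ∈ range N, (if tri (k + 1 - 1) = M then (1 : ℤ) else 0)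
        + (if tri 0 = M then (1 : ℤ) else 0) := by
    rw [Finset.sum_range_succ' (fun k => if dd N (N + k) = M then (1 : ℤ) else 0) N]
    congr 1
    · refine Finset.sum_congr rfl fun k _ => ?_
      rw [show dd N (N + (k + 1)) = tri (k + 1 - 1) from by unfold dd; congr 1; omega]
    · rw [show dd N (N + 0) = tri 0 from by unfold dd; congr 1; omega]
  have h3' : ∑ k ∈ range N, (if tri (k + 1 - 1) = M then (1 : ℤ) else 0)
      = ∑ k ∈ range N, (if tri k = M then (1 : ℤ) else 0) := by
    refine Finset.sum_congr rfl fun k _ => ?_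
    rw [Nat.add_sub_cancel]
  rw [h2, h3, h3']
  have h4 : ∑ k ∈ range N, (if tri (k + 1) = M then (1 : ℤ) else 0)
        + (if tri 0 = M then (1 : ℤ) else 0)
      = ∑ k ∈ range (N + 1), (if tri k = M then (1 : ℤ) else 0) :=
    (Finset.sum_range_succ' (fun k => if tri k = M then (1 : ℤ) else 0) N).symm
  have h5 : ∑ k ∈ range (N + 1), (if tri k = M then (1 : ℤ) else 0)
      = ∑ k ∈ range N, (if tri k = M then (1 : ℤ) else 0) := by
    rw [Finset.sum_range_succ, if_neg, add_zero]
    have := tri_ge N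
    omega
  rw [← h5, ← h4]
  ring

lemma coeff_main (M : ℕ) :
    (PowerSeries.coeff M) (∑ m ∈ range (M + 1), (PowerSeries.X : Zq) ^ (tri m))
      = (PowerSeries.coeff M)
        ((∏ i ∈ range (M + 1), (1 + (PowerSeries.X : Zq) ^ (i + 1))) ^ 2
          * ∏ i ∈ range (M + 1), (1 - (PowerSeries.X : Zq) ^ (i + 1))) := by
  have hE := congrArg (fun z : Zq => z * W 1 (2 * (M + 1) + 1)) (evalId (M + 1))
  have hcoeff := congrArg (PowerSeries.coeff M) hE
  rw [Finset.sum_mul, map_sum] at hcoeff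
  rw [Finset.sum_congr rfl (fun k hk => coeff_term M (M + 1) k rfl
    (by rw [Finset.mem_range] at hk; omega))] at hcoeff
  rw [count M (M + 1) rfl] at hcoeff
  -- now compute LHS of hcoeff via congruences
  -- LHS' = (∏_{i<M+1}(1+X^{i+1}) * ∏_{i<M+1}(1+X^i)) * W 1 (2M+3)
  have hsplit2 : (∏ i ∈ range (M + 1), (1 + (PowerSeries.X : Zq) ^ i))
      = (∏ i ∈ range M, (1 + (PowerSeries.X : Zq) ^ (i + 1))) * 2 := by
    rw [Finset.prod_range_succ' (fun i => (1 + (PowerSeries.X : Zq) ^ i)) M]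
    norm_num
  have hWrange : W 1 (2 * (M + 1) + 1)
      = ∏ i ∈ range (2 * (M + 1)), (1 - (PowerSeries.X : Zq) ^ (i + 1)) := by
    rw [W, Finset.prod_Ico_eq_prod_range]
    refine Finset.prod_congr (by congr 1) fun i _ => ?_
    rw [add_comm 1 i]
  set P : Zq := ∏ i ∈ range (M + 1), (1 + (PowerSeries.X : Zq) ^ (i + 1)) with hP
  set Q : Zq := ∏ i ∈ range (M + 1), (1 - (PowerSeries.X : Zq) ^ (i + 1)) with hQ
  have hcong1 : Cong M (∏ i ∈ range M, (1 + (PowerSeries.X : Zq) ^ (i + 1))) P := by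
    refine (Cong.prod_superset (Finset.range_subset_range.2 (by omega)) _ fun i _ hi2 => ?_).symm
    rw [Finset.mem_range, not_lt] at hi2
    exact cong_one_add (by omega)
  have hcong2 : Cong M (∏ i ∈ range (2 * (M + 1)), (1 - (PowerSeries.X : Zq) ^ (i + 1))) Q := by
    refine Cong.prod_superset (Finset.range_subset_range.2 (by omega)) _ fun i _ hi2 => ?_
    rw [Finset.mem_range, not_lt] at hi2
    exact cong_one_sub (by omega)
  have hcongAll : Cong M ((P * (∏ i ∈ range (M + 1), (1 + (PowerSeries.X : Zq) ^ i)))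
      * W 1 (2 * (M + 1) + 1)) (2 * (P ^ 2 * Q)) := by
    rw [hsplit2, hWrange]
    have hc : Cong M ((P * ((∏ i ∈ range M, (1 + (PowerSeries.X : Zq) ^ (i + 1))) * 2))
        * (∏ i ∈ range (2 * (M + 1)), (1 - (PowerSeries.X : Zq) ^ (i + 1))))
        ((P * (P * 2)) * Q) :=
      Cong.mul (Cong.mul (Cong.refl P) (Cong.mul hcong1 (Cong.refl 2))) hcong2
    refine hc.trans ?_
    rw [show (P * (P * 2)) * Q = 2 * (P ^ 2 * Q) from by ring]
    exact Cong.refl _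
  rw [hcongAll M le_rfl] at hcoeff
  -- LHS of goal
  have hsum : (PowerSeries.coeff M) (∑ m ∈ range (M + 1), (PowerSeries.X : Zq) ^ (tri m))
      = ∑ m ∈ range (M + 1), (if tri m = M then (1 : ℤ) else 0) := by
    rw [map_sum]
    refine Finset.sum_congr rfl fun m _ => ?_
    rw [PowerSeries.coeff_X_pow]
    exact if_congr eq_comm rfl rfl
  rw [two_mul, map_add] at hcoeff
  rw [hsum]
  omega

end Counting
section Final
open PowerSeries Finset

lemma congMain (M : ℕ) :
    Cong M (∑ m ∈ range (M + 1), (PowerSeries.X : Zq) ^ (tri m))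
      ((∏ i ∈ range (M + 1), (1 + (PowerSeries.X : Zq) ^ (i + 1))) ^ 2
        * ∏ i ∈ range (M + 1), (1 - (PowerSeries.X : Zq) ^ (i + 1))) := by
  intro i hi
  have hs : Cong i (∑ m ∈ range (M + 1), (PowerSeries.X : Zq) ^ (tri m))
      (∑ m ∈ range (i + 1), (PowerSeries.X : Zq) ^ (tri m)) :=
    Cong.sum_superset (Finset.range_subset_range.2 (by omega)) _ (fun m _ hm2 => by
      rw [Finset.mem_range, not_lt] at hm2
      exact cong_zero_pow (lt_of_lt_of_le (by omega) (tri_ge m)))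
  have hP : Cong i (∏ j ∈ range (M + 1), (1 + (PowerSeries.X : Zq) ^ (j + 1)))
      (∏ j ∈ range (i + 1), (1 + (PowerSeries.X : Zq) ^ (j + 1))) :=
    Cong.prod_superset (Finset.range_subset_range.2 (by omega)) _ (fun j _ hj2 => by
      rw [Finset.mem_range, not_lt] at hj2
      exact cong_one_add (by omega))
  have hQ : Cong i (∏ j ∈ range (M + 1), (1 - (PowerSeries.X : Zq) ^ (j + 1)))
      (∏ j ∈ range (i + 1), (1 - (PowerSeries.X : Zq) ^ (j + 1))) :=
    Cong.prod_superset (Finset.range_subset_range.2 (by omega)) _ (fun j _ hj2 => by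
      rw [Finset.mem_range, not_lt] at hj2
      exact cong_one_sub (by omega))
  have hfin : Cong i
      ((∏ j ∈ range (M + 1), (1 + (PowerSeries.X : Zq) ^ (j + 1))) ^ 2
        * ∏ j ∈ range (M + 1), (1 - (PowerSeries.X : Zq) ^ (j + 1)))
      ((∏ j ∈ range (i + 1), (1 + (PowerSeries.X : Zq) ^ (j + 1))) ^ 2
        * ∏ j ∈ range (i + 1), (1 - (PowerSeries.X : Zq) ^ (j + 1))) := by
    rw [pow_two, pow_two]
    exact Cong.mul (Cong.mul hP hP) hQ
  rw [hs i le_rfl, hfin i le_rfl]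
  exact coeff_main i

lemma PQ_even (L : ℕ) :
    (∏ i ∈ range L, (1 + (PowerSeries.X : Zq) ^ (i + 1)))
      * (∏ i ∈ range L, (1 - (PowerSeries.X : Zq) ^ (i + 1)))
      = ∏ i ∈ range L, (1 - (PowerSeries.X : Zq) ^ (2 * i + 2)) := by
  rw [← Finset.prod_mul_distrib]
  refine Finset.prod_congr rfl fun i _ => ?_
  have h : (PowerSeries.X : Zq) ^ (2 * i + 2) = (PowerSeries.X ^ (i + 1)) ^ 2 := by
    rw [← pow_mul]
    congr 1
    omega
  rw [h]
  ring

lemma parity_split (L : ℕ) :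
    ∏ i ∈ range (2 * L), (1 - (PowerSeries.X : Zq) ^ (i + 1))
      = (∏ i ∈ range L, (1 - (PowerSeries.X : Zq) ^ (2 * i + 2)))
        * (∏ i ∈ range L, (1 - (PowerSeries.X : Zq) ^ (2 * i + 1))) := by
  induction L with
  | zero => simp
  | succ L ih =>
    rw [show 2 * (L + 1) = (2 * L + 1) + 1 from by omega, Finset.prod_range_succ,
      Finset.prod_range_succ, Finset.prod_range_succ, Finset.prod_range_succ, ih,
      show 2 * L + 1 + 1 = 2 * L + 2 from by omega]
    ring

/-- the key congruence: (Σ X^{T_m}) · (q;q²)_L ≡ (q²;q²)_L  mod X^{M+1}, over ℤ -/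
lemma congOdd (M : ℕ) :
    Cong M ((∑ m ∈ range (M + 1), (PowerSeries.X : Zq) ^ (tri m))
        * ∏ n ∈ range (M + 1), (1 - (PowerSeries.X : Zq) ^ (2 * n + 1)))
      (∏ n ∈ range (M + 1), (1 - (PowerSeries.X : Zq) ^ (2 * n + 2))) := by
  have h1 : Cong M ((∑ m ∈ range (M + 1), (PowerSeries.X : Zq) ^ (tri m))
      * ∏ n ∈ range (M + 1), (1 - (PowerSeries.X : Zq) ^ (2 * n + 1)))
      (((∏ i ∈ range (M + 1), (1 + (PowerSeries.X : Zq) ^ (i + 1))) ^ 2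
        * ∏ i ∈ range (M + 1), (1 - (PowerSeries.X : Zq) ^ (i + 1)))
        * ∏ n ∈ range (M + 1), (1 - (PowerSeries.X : Zq) ^ (2 * n + 1))) :=
    Cong.mul (congMain M) (Cong.refl _)
  refine h1.trans ?_
  have h2 : ((∏ i ∈ range (M + 1), (1 + (PowerSeries.X : Zq) ^ (i + 1))) ^ 2
        * ∏ i ∈ range (M + 1), (1 - (PowerSeries.X : Zq) ^ (i + 1)))
        * ∏ n ∈ range (M + 1), (1 - (PowerSeries.X : Zq) ^ (2 * n + 1))
      = (∏ i ∈ range (M + 1), (1 + (PowerSeries.X : Zq) ^ (i + 1)))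
        * ∏ i ∈ range (2 * (M + 1)), (1 - (PowerSeries.X : Zq) ^ (i + 1)) := by
    rw [parity_split (M + 1), ← PQ_even (M + 1)]
    ring
  rw [h2]
  have h3 : Cong M ((∏ i ∈ range (M + 1), (1 + (PowerSeries.X : Zq) ^ (i + 1)))
      * ∏ i ∈ range (2 * (M + 1)), (1 - (PowerSeries.X : Zq) ^ (i + 1)))
      ((∏ i ∈ range (M + 1), (1 + (PowerSeries.X : Zq) ^ (i + 1)))
        * ∏ i ∈ range (M + 1), (1 - (PowerSeries.X : Zq) ^ (i + 1))) :=
    Cong.mul (Cong.refl _) (Cong.prod_superset (Finset.range_subset_range.2 (by omega)) _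
      (fun i _ hi2 => by
        rw [Finset.mem_range, not_lt] at hi2
        exact cong_one_sub (by omega)))
  refine h3.trans ?_
  rw [PQ_even (M + 1)]
  exact Cong.refl _

/-- transfer of congOdd to ℚ -/
lemma congOddQ (M : ℕ) :
    Cong M ((∑ m ∈ range (M + 1), (PowerSeries.X : PowerSeries ℚ) ^ (tri m))
        * ∏ n ∈ range (M + 1), (1 - (PowerSeries.X : PowerSeries ℚ) ^ (2 * n + 1)))
      (∏ n ∈ range (M + 1), (1 - (PowerSeries.X : PowerSeries ℚ) ^ (2 * n + 2))) := by
  intro i hi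
  have h := congOdd M i hi
  have hm : ∀ (f : Zq), PowerSeries.coeff i (PowerSeries.map (Int.castRingHom ℚ) f)
      = ((PowerSeries.coeff i f : ℤ) : ℚ) := fun f => by
    rw [PowerSeries.coeff_map]
    rfl
  have e1 : PowerSeries.map (Int.castRingHom ℚ)
      ((∑ m ∈ range (M + 1), (PowerSeries.X : Zq) ^ (tri m))
        * ∏ n ∈ range (M + 1), (1 - (PowerSeries.X : Zq) ^ (2 * n + 1)))
      = (∑ m ∈ range (M + 1), (PowerSeries.X : PowerSeries ℚ) ^ (tri m))
        * ∏ n ∈ range (M + 1), (1 - (PowerSeries.X : PowerSeries ℚ) ^ (2 * n + 1)) := by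
    simp [map_mul, map_sum, map_prod, map_sub, map_pow, PowerSeries.map_X]
  have e2 : PowerSeries.map (Int.castRingHom ℚ)
      (∏ n ∈ range (M + 1), (1 - (PowerSeries.X : Zq) ^ (2 * n + 2)))
      = ∏ n ∈ range (M + 1), (1 - (PowerSeries.X : PowerSeries ℚ) ^ (2 * n + 2)) := by
    simp [map_prod, map_sub, map_pow, PowerSeries.map_X]
  rw [← e1, ← e2, hm, hm, h]

end Final
open PowerSeries Finset in
/-- Gauss's identity: (−q;q)_∞ · Σ q^{T_m} = (−q;q)_∞^3 · (q;q)_∞, i.e.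
Σ_{m≥0} q^{m(m+1)/2} = (q²;q²)_∞ / (q;q²)_∞. -/
theorem stmt1 :
    ((∏' n : ℕ, (1 + (X : PowerSeries ℤ) ^ (n + 1))) *
        ∑' m : ℕ, (X : PowerSeries ℤ) ^ (m * (m + 1) / 2))
      = (∏' n : ℕ, (1 + (X : PowerSeries ℤ) ^ (n + 1))) ^ 3 *
          ∏' n : ℕ, (1 - (X : PowerSeries ℤ) ^ (n + 1)) ∧
    (∑' m : ℕ, (X : PowerSeries ℚ) ^ (m * (m + 1) / 2))
      = (∏' n : ℕ, (1 - (X : PowerSeries ℚ) ^ (2 * (n + 1)))) *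
          (∏' n : ℕ, (1 - (X : PowerSeries ℚ) ^ (2 * n + 1)))⁻¹ := by
  have HA : ∀ (n M : ℕ), M < n → Cong M (1 + (X : PowerSeries ℤ) ^ (n + 1)) 1 :=
    fun n M h => cong_one_add (by omega)
  have HB : ∀ (n M : ℕ), M < n → Cong M (1 - (X : PowerSeries ℤ) ^ (n + 1)) 1 :=
    fun n M h => cong_one_sub (by omega)
  have HS : ∀ (m M : ℕ), M < m → Cong M ((X : PowerSeries ℤ) ^ (m * (m + 1) / 2)) 0 :=
    fun m M h => cong_zero_pow (by have h2 := tri_ge m; rw [tri_eq] at h2; omega)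
  have HSQ : ∀ (m M : ℕ), M < m → Cong M ((X : PowerSeries ℚ) ^ (m * (m + 1) / 2)) 0 :=
    fun m M h => cong_zero_pow (by have h2 := tri_ge m; rw [tri_eq] at h2; omega)
  have HC : ∀ (n M : ℕ), M < n → Cong M (1 - (X : PowerSeries ℚ) ^ (2 * (n + 1))) 1 :=
    fun n M h => cong_one_sub (by omega)
  have HD : ∀ (n M : ℕ), M < n → Cong M (1 - (X : PowerSeries ℚ) ^ (2 * n + 1)) 1 :=
    fun n M h => cong_one_sub (by omega)
  have eA : (∏' n : ℕ, (1 + (X : PowerSeries ℤ) ^ (n + 1)))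
      = limProd (fun n => 1 + (X : PowerSeries ℤ) ^ (n + 1)) :=
    HasProd.tprod_eq (hasProd_limProd _ HA)
  have eB : (∏' n : ℕ, (1 - (X : PowerSeries ℤ) ^ (n + 1)))
      = limProd (fun n => 1 - (X : PowerSeries ℤ) ^ (n + 1)) :=
    HasProd.tprod_eq (hasProd_limProd _ HB)
  have eS : (∑' m : ℕ, (X : PowerSeries ℤ) ^ (m * (m + 1) / 2))
      = limSum (fun m => (X : PowerSeries ℤ) ^ (m * (m + 1) / 2)) :=
    HasSum.tsum_eq (hasSum_limSum _ HS)
  have eSQ : (∑' m : ℕ, (X : PowerSeries ℚ) ^ (m * (m + 1) / 2))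
      = limSum (fun m => (X : PowerSeries ℚ) ^ (m * (m + 1) / 2)) :=
    HasSum.tsum_eq (hasSum_limSum _ HSQ)
  have eC : (∏' n : ℕ, (1 - (X : PowerSeries ℚ) ^ (2 * (n + 1))))
      = limProd (fun n => 1 - (X : PowerSeries ℚ) ^ (2 * (n + 1))) :=
    HasProd.tprod_eq (hasProd_limProd _ HC)
  have eD : (∏' n : ℕ, (1 - (X : PowerSeries ℚ) ^ (2 * n + 1)))
      = limProd (fun n => 1 - (X : PowerSeries ℚ) ^ (2 * n + 1)) :=
    HasProd.tprod_eq (hasProd_limProd _ HD)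
  rw [eA, eB, eS, eSQ, eC, eD]
  constructor
  · -- integer statement
    apply PowerSeries.ext
    intro M
    have gA := limProd_cong (fun n => 1 + (X : PowerSeries ℤ) ^ (n + 1)) HA M
    have gB := limProd_cong (fun n => 1 - (X : PowerSeries ℤ) ^ (n + 1)) HB M
    have gS := limSum_cong (fun m => (X : PowerSeries ℤ) ^ (m * (m + 1) / 2)) HS M
    have htri : (∑ m ∈ range (M + 1), (X : PowerSeries ℤ) ^ (m * (m + 1) / 2))
        = ∑ m ∈ range (M + 1), (X : PowerSeries ℤ) ^ (tri m) :=
      Finset.sum_congr rfl fun m _ => by rw [tri_eq]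
    rw [htri] at gS
    have hL : Cong M
        ((limProd (fun n => 1 + (X : PowerSeries ℤ) ^ (n + 1)))
          * limSum (fun m => (X : PowerSeries ℤ) ^ (m * (m + 1) / 2)))
        ((∏ i ∈ range (M + 1), (1 + (X : PowerSeries ℤ) ^ (i + 1)))
          * ∑ m ∈ range (M + 1), (X : PowerSeries ℤ) ^ (tri m)) := Cong.mul gA gS
    have hR : Cong M
        ((limProd (fun n => 1 + (X : PowerSeries ℤ) ^ (n + 1))) ^ 3
          * limProd (fun n => 1 - (X : PowerSeries ℤ) ^ (n + 1)))
        ((∏ i ∈ range (M + 1), (1 + (X : PowerSeries ℤ) ^ (i + 1))) ^ 3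
          * ∏ i ∈ range (M + 1), (1 - (X : PowerSeries ℤ) ^ (i + 1))) := by
      have e1 : (limProd (fun n => 1 + (X : PowerSeries ℤ) ^ (n + 1))) ^ 3
          = limProd (fun n => 1 + (X : PowerSeries ℤ) ^ (n + 1))
            * (limProd (fun n => 1 + (X : PowerSeries ℤ) ^ (n + 1))
              * limProd (fun n => 1 + (X : PowerSeries ℤ) ^ (n + 1))) := by ring
      have e2 : (∏ i ∈ range (M + 1), (1 + (X : PowerSeries ℤ) ^ (i + 1))) ^ 3
          = (∏ i ∈ range (M + 1), (1 + (X : PowerSeries ℤ) ^ (i + 1)))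
            * ((∏ i ∈ range (M + 1), (1 + (X : PowerSeries ℤ) ^ (i + 1)))
              * ∏ i ∈ range (M + 1), (1 + (X : PowerSeries ℤ) ^ (i + 1))) := by ring
      rw [e1, e2]
      exact Cong.mul (Cong.mul gA (Cong.mul gA gA)) gB
    have hmid : Cong M
        ((∏ i ∈ range (M + 1), (1 + (X : PowerSeries ℤ) ^ (i + 1)))
          * ∑ m ∈ range (M + 1), (X : PowerSeries ℤ) ^ (tri m))
        ((∏ i ∈ range (M + 1), (1 + (X : PowerSeries ℤ) ^ (i + 1))) ^ 3
          * ∏ i ∈ range (M + 1), (1 - (X : PowerSeries ℤ) ^ (i + 1))) := by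
      have h1 := Cong.mul (Cong.refl (M := M)
        (∏ i ∈ range (M + 1), (1 + (X : PowerSeries ℤ) ^ (i + 1)))) (congMain M)
      refine h1.trans ?_
      rw [show (∏ i ∈ range (M + 1), (1 + (X : PowerSeries ℤ) ^ (i + 1)))
          * ((∏ i ∈ range (M + 1), (1 + (X : PowerSeries ℤ) ^ (i + 1))) ^ 2
            * ∏ i ∈ range (M + 1), (1 - (X : PowerSeries ℤ) ^ (i + 1)))
          = (∏ i ∈ range (M + 1), (1 + (X : PowerSeries ℤ) ^ (i + 1))) ^ 3
            * ∏ i ∈ range (M + 1), (1 - (X : PowerSeries ℤ) ^ (i + 1)) from by ring]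
      exact Cong.refl _
    rw [hL M le_rfl, hmid M le_rfl, ← hR M le_rfl]
  · -- rational statement
    have gSQ := limSum_cong (fun m => (X : PowerSeries ℚ) ^ (m * (m + 1) / 2)) HSQ
    have gC := limProd_cong (fun n => 1 - (X : PowerSeries ℚ) ^ (2 * (n + 1))) HC
    have gD := limProd_cong (fun n => 1 - (X : PowerSeries ℚ) ^ (2 * n + 1)) HD
    have key : limSum (fun m => (X : PowerSeries ℚ) ^ (m * (m + 1) / 2))
        * limProd (fun n => 1 - (X : PowerSeries ℚ) ^ (2 * n + 1))
        = limProd (fun n => 1 - (X : PowerSeries ℚ) ^ (2 * (n + 1))) := by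
      apply PowerSeries.ext
      intro M
      have htri : (∑ m ∈ range (M + 1), (X : PowerSeries ℚ) ^ (m * (m + 1) / 2))
          = ∑ m ∈ range (M + 1), (X : PowerSeries ℚ) ^ (tri m) :=
        Finset.sum_congr rfl fun m _ => by rw [tri_eq]
      have gSQ' := gSQ M
      rw [htri] at gSQ'
      have hL : Cong M
          (limSum (fun m => (X : PowerSeries ℚ) ^ (m * (m + 1) / 2))
            * limProd (fun n => 1 - (X : PowerSeries ℚ) ^ (2 * n + 1)))
          ((∑ m ∈ range (M + 1), (X : PowerSeries ℚ) ^ (tri m))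
            * ∏ n ∈ range (M + 1), (1 - (X : PowerSeries ℚ) ^ (2 * n + 1))) :=
        Cong.mul gSQ' (gD M)
      have hC2 : (∏ n ∈ range (M + 1), (1 - (X : PowerSeries ℚ) ^ (2 * (n + 1))))
          = ∏ n ∈ range (M + 1), (1 - (X : PowerSeries ℚ) ^ (2 * n + 2)) :=
        Finset.prod_congr rfl fun n _ => by rw [show 2 * (n + 1) = 2 * n + 2 from by omega]
      have gC' := gC M
      rw [hC2] at gC'
      rw [hL M le_rfl, (congOddQ M) M le_rfl, ← gC' M le_rfl]
    have hunit : PowerSeries.constantCoeff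
        (limProd (fun n => 1 - (X : PowerSeries ℚ) ^ (2 * n + 1))) ≠ 0 := by
      have g0 := gD 0 0 le_rfl
      rw [Finset.prod_range_one] at g0
      rw [← PowerSeries.coeff_zero_eq_constantCoeff_apply, g0]
      simp
    rw [← key, mul_assoc, PowerSeries.mul_inv_cancel _ hunit, mul_one]
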